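/- arXiv:0910.4205 — 4 statements merged into one kernel-verified Lean document; each statement's English description precedes it below -/
import Mathlib

section
/- Let f : [0, ζ_f] → ℝ and g : [0, ζ_g] → ℝ be continuous functions with g(0) = 0, and suppose f attains its minimum at its terminal time, i.e. f(ζ_f) = min_{0≤s≤ζ_f} f(s). Then reflecting at the running infimum commutes with concatenation: (f − f̲) ⊕ (g − g̲) = (f ⊕ g) − ((f ⊕ g))̲, where for a path h defined on [0, ζ_h], h̲(t) := min_{0≤s≤t} h(s) denotes its running infimum process. (This is the two-path case of the paper's concatenation lemma, from which the general finite case follows by induction.) -/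
namespace IPC

/-- Running infimum process of a path: `runInf f t = min_{0 ≤ s ≤ t} f s`. -/
noncomputable def runInf (f : ℝ → ℝ) (t : ℝ) : ℝ := sInf (f '' Set.Icc 0 t)

/-- Concatenation of a stopped path `f`, with lifetime `ζf`, with a path `g`:
`(f ⊕ g)(t) = f t` for `t ≤ ζf` and `(f ⊕ g)(t) = f ζf + g (t - ζf)` for `t ≥ ζf`. -/
noncomputable def pathConcat (f g : ℝ → ℝ) (ζf : ℝ) : ℝ → ℝ := fun t =>
  if t ≤ ζf then f t else f ζf + g (t - ζf)

/-- Reflection of a path at its running infimum: `f - f̲`. -/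
noncomputable def reflect (f : ℝ → ℝ) : ℝ → ℝ := fun t => f t - runInf f t

/-- Reflecting at the running infimum commutes with concatenation:
if `f : [0, ζf] → ℝ` and `g : [0, ζg] → ℝ` are continuous, `g 0 = 0`, and `f` attains
its minimum at its terminal time `ζf`, then
`(f − f̲) ⊕ (g − g̲) = (f ⊕ g) − ((f ⊕ g))̲` on `[0, ζf + ζg]`. -/
theorem reflect_pathConcat_comm (f g : ℝ → ℝ) (ζf ζg : ℝ)
    (hζf : 0 ≤ ζf) (hζg : 0 ≤ ζg)
    (hf : ContinuousOn f (Set.Icc 0 ζf)) (hg : ContinuousOn g (Set.Icc 0 ζg))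
    (hg0 : g 0 = 0) (hmin : f ζf = sInf (f '' Set.Icc 0 ζf)) :
    ∀ t ∈ Set.Icc 0 (ζf + ζg),
      pathConcat (reflect f) (reflect g) ζf t
        = pathConcat f g ζf t - runInf (pathConcat f g ζf) t := by
  intro t ht
  obtain ⟨ht0, ht1⟩ := ht
  by_cases htf : t ≤ ζf
  · have heq : ∀ s ∈ Set.Icc (0:ℝ) t, pathConcat f g ζf s = f s := by
      intro s hs
      simp [pathConcat, hs.2.trans htf]
    have hri : runInf (pathConcat f g ζf) t = runInf f t := by
      unfold runInf
      rw [Set.image_congr heq]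
    simp [pathConcat, htf, reflect, hri]
  · push_neg at htf
    set u := t - ζf with hu
    have hu0 : 0 ≤ u := by simp [hu]; linarith
    have huζ : u ≤ ζg := by simp [hu]; linarith
    -- split the image of the concatenation
    have hsplit : Set.Icc (0:ℝ) t = Set.Icc 0 ζf ∪ Set.Icc ζf t :=
      (Set.Icc_union_Icc_eq_Icc hζf htf.le).symm
    have himg : pathConcat f g ζf '' Set.Icc 0 t
        = f '' Set.Icc 0 ζf ∪ (fun x => f ζf + x) '' (g '' Set.Icc 0 u) := by
      rw [hsplit, Set.image_union]
      congr 1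
      · exact Set.image_congr fun s hs => by simp [pathConcat, hs.2]
      · have h1 : ∀ s ∈ Set.Icc ζf t, pathConcat f g ζf s = f ζf + g (s - ζf) := by
          intro s hs
          rcases eq_or_lt_of_le hs.1 with h | h
          · simp [pathConcat, ← h, hg0]
          · simp [pathConcat, not_le_of_gt h]
        rw [Set.image_congr h1, Set.image_image]
        have h2 : (fun s : ℝ => f ζf + g (s - ζf))
            = (fun x => f ζf + g x) ∘ (fun s => s - ζf) := rfl
        rw [h2, Set.image_comp, Set.image_sub_const_Icc, sub_self]
    have hAbdd : BddBelow (f '' Set.Icc 0 ζf) :=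
      (isCompact_Icc.image_of_continuousOn hf).bddBelow
    have hAne : (f '' Set.Icc 0 ζf).Nonempty :=
      (Set.nonempty_Icc.2 hζf).image f
    have hgB : ContinuousOn g (Set.Icc 0 u) :=
      hg.mono (Set.Icc_subset_Icc_right huζ)
    have hBbdd : BddBelow (g '' Set.Icc 0 u) :=
      (isCompact_Icc.image_of_continuousOn hgB).bddBelow
    have hBne : (g '' Set.Icc 0 u).Nonempty :=
      (Set.nonempty_Icc.2 hu0).image g
    have hshift : sInf ((fun x => f ζf + x) '' (g '' Set.Icc 0 u))
        = f ζf + sInf (g '' Set.Icc 0 u) :=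
      ((OrderIso.addLeft (f ζf)).map_csInf' hBne hBbdd).symm
    have hIg : sInf (g '' Set.Icc 0 u) ≤ 0 := by
      have h0 : g 0 ∈ g '' Set.Icc 0 u := ⟨0, ⟨le_refl 0, hu0⟩, rfl⟩
      have := csInf_le hBbdd h0
      rwa [hg0] at this
    have hri : runInf (pathConcat f g ζf) t = f ζf + sInf (g '' Set.Icc 0 u) := by
      unfold runInf
      rw [himg, csInf_union hAbdd hAne
        (by rw [hshift] at *; exact ⟨f ζf + sInf (g '' Set.Icc 0 u), fun x hx => by
          obtain ⟨y, hy, rfl⟩ := hx; exact add_le_add_right (csInf_le hBbdd hy) _⟩)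
        (hBne.image _), hshift, ← hmin]
      exact min_eq_right (by linarith)
    have hrf : runInf f ζf = f ζf := by
      unfold runInf; exact hmin.symm
    have hri' : runInf (pathConcat f g ζf) t = f ζf + runInf g u := hri
    simp only [pathConcat, not_le_of_gt htf, if_false, reflect, ← hu, hri', hrf]
    ring
  
end IPC
end

section
/- Let T and S be finite plane trees, let v be the rightmost leaf of T (the lexicographically maximal vertex of T), and let R = T ⊕ S be the right-grafting of S on T, i.e. the plane tree with vertex set (T \ {v}) ∪ {v·w : w ∈ S}, obtained by identifying the root of S with v. Let V_T, V_S, V_R denote the Lukaciewicz paths of T, S, R respectively, and let V'_T be the restriction of V_T to {0, 1, …, #T − 1} (i.e. V_T without its final value −1). Then V_R = V'_T ⊕ V_S, where ⊕ denotes concatenation of integer-indexed paths: (P ⊕ Q)(t) = P(t) for 0 ≤ t ≤ m and (P ⊕ Q)(t) = P(m) + Q(t − m) for m ≤ t ≤ m + l, when P is defined on {0,…,m} and Q on {0,…,l} with Q(0) = 0. -/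
namespace IPC
/-- A plane tree: a set of finite sequences of positive integers (vertices), containing
the root `[]`, closed under prefixes, closed under earlier siblings, with labels ≥ 1. -/
def IsPlaneTree (T : Set (List ℕ)) : Prop :=
  [] ∈ T ∧
  (∀ v ∈ T, ∀ u : List ℕ, u <+: v → u ∈ T) ∧
  (∀ (v : List ℕ) (i j : ℕ), v ++ [i] ∈ T → 1 ≤ j → j ≤ i → v ++ [j] ∈ T) ∧
  (∀ v ∈ T, ∀ i ∈ v, 1 ≤ i)
/-- `kv T v` : number of children of the vertex `v` in `T`. -/
noncomputable def kv (T : Set (List ℕ)) (v : List ℕ) : ℕ := {i : ℕ | v ++ [i] ∈ T}.ncard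
/-- `rank T v` : number of strict lexicographic predecessors of `v` in `T`. -/
noncomputable def rank (T : Set (List ℕ)) (v : List ℕ) : ℕ := {u ∈ T | u < v}.ncard
/-- Lukaciewicz path of `T`: `luk T n = ∑_{i<n} (k_{vⁱ} - 1)` where `vⁱ` is the `i`-th
vertex of `T` in lexicographic order. -/
noncomputable def luk (T : Set (List ℕ)) (n : ℕ) : ℤ :=
  ∑ᶠ v ∈ {u ∈ T | rank T u < n}, ((kv T v : ℤ) - 1)
/-- `T^v`: the set of vertices of `T` lexicographically ≤ `v`. -/
def below (T : Set (List ℕ)) (v : List ℕ) : Set (List ℕ) := {u ∈ T | u ≤ v}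
/-- `nEdge T v = n(v,T)`: the number of edges of `T` with exactly one endpoint in `T^v`;
an edge is identified with its child endpoint. -/
noncomputable def nEdge (T : Set (List ℕ)) (v : List ℕ) : ℕ :=
  {c ∈ T | c ≠ [] ∧ Xor' (c.dropLast ∈ below T v) (c ∈ below T v)}.ncard

theorem append_lt_append (p a b : List ℕ) : p ++ a < p ++ b ↔ a < b := by
  induction p with
  | nil => simp
  | cons x p ih => simpa using ih

theorem append_le_append (p a b : List ℕ) : p ++ a ≤ p ++ b ↔ a ≤ b := by
  simp only [le_iff_lt_or_eq, append_lt_append, List.append_cancel_left_eq]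

theorem prefix_le {a b : List ℕ} (h : a <+: b) : a ≤ b := by
  obtain ⟨s, rfl⟩ := h
  calc a = a ++ [] := by simp
  _ ≤ a ++ s := (append_le_append _ _ _).2 (by
    cases s with
    | nil => exact le_rfl
    | cons x t => exact le_of_lt (List.nil_lt_cons x t))

theorem lt_append {a s : List ℕ} (h : s ≠ []) : a < a ++ s := by
  have : a ++ [] < a ++ s := (append_lt_append _ _ _).2 (by
    cases s with
    | nil => simp at h
    | cons x t => exact List.nil_lt_cons x t)
  simpa using this

section Graft

variable {T S : Set (List ℕ)} {v : List ℕ}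

theorem ext_notin (hvmax : ∀ u ∈ T, u ≤ v) {w : List ℕ} (hw : w ≠ []) : v ++ w ∉ T :=
  fun hmem => absurd (hvmax _ hmem) (not_le.2 (lt_append hw))

theorem rank_v (hv : v ∈ T) (hvmax : ∀ u ∈ T, u ≤ v) (hTfin : T.Finite) :
    rank T v = T.ncard - 1 := by
  have hset : {u ∈ T | u < v} = T \ {v} := by
    ext u
    simp only [Set.mem_sep_iff, Set.mem_diff, Set.mem_singleton_iff]
    exact ⟨fun ⟨hu, hlt⟩ => ⟨hu, ne_of_lt hlt⟩,
      fun ⟨hu, hne⟩ => ⟨hu, lt_of_le_of_ne (hvmax u hu) hne⟩⟩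
  rw [rank, hset, Set.ncard_diff_singleton_of_mem hv]

theorem rank_lt_of_ne (hv : v ∈ T) (hvmax : ∀ u ∈ T, u ≤ v) (hTfin : T.Finite)
    {u : List ℕ} (hu : u ∈ T) (hne : u ≠ v) : rank T u < T.ncard - 1 := by
  have huv : u < v := lt_of_le_of_ne (hvmax u hu) hne
  have hsub : insert u {x ∈ T | x < u} ⊆ {x ∈ T | x < v} := by
    rintro x (rfl | ⟨hx, hlt⟩)
    · exact ⟨hu, huv⟩
    · exact ⟨hx, hlt.trans huv⟩
  have hnm : u ∉ {x ∈ T | x < u} := fun h => lt_irrefl u h.2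
  have hfin : {x ∈ T | x < u}.Finite := hTfin.subset (Set.sep_subset _ _)
  have h1 : rank T u + 1 ≤ rank T v := by
    rw [rank, rank, ← Set.ncard_insert_of_notMem hnm hfin]
    exact Set.ncard_le_ncard hsub (hTfin.subset (Set.sep_subset _ _))
  rw [rank_v hv hvmax hTfin] at h1
  omega

theorem kvR_mem (hS1 : [] ∈ S) (hv : v ∈ T) (hvmax : ∀ u ∈ T, u ≤ v)
    {u : List ℕ} (hu : u ∈ T) (hne : u ≠ v) :
    kv ((T \ {v}) ∪ (fun w => v ++ w) '' S) u = kv T u := by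
  rw [kv, kv]
  congr 1
  ext i
  simp only [Set.mem_setOf_eq, Set.mem_union, Set.mem_diff, Set.mem_singleton_iff,
    Set.mem_image]
  constructor
  · rintro (⟨h, _⟩ | ⟨w, hw, he⟩)
    · exact h
    · rcases eq_or_ne w [] with rfl | hwne
      · simp only [List.append_nil] at he
        exact he ▸ hv
      · exfalso
        have hpre : v <+: u ++ [i] := he ▸ List.prefix_append v w
        have hlen : v.length ≤ u.length := by
          have := congrArg List.length he
          simp only [List.length_append, List.length_singleton] at this
          have hw1 : 1 ≤ w.length := List.length_pos_iff.2 hwne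
          omega
        have hvu : v <+: u :=
          List.prefix_of_prefix_length_le hpre (List.prefix_append u [i]) hlen
        exact hne (le_antisymm (hvmax u hu) (prefix_le hvu))
  · intro h
    by_cases hE : u ++ [i] = v
    · exact Or.inr ⟨[], hS1, by simp [hE]⟩
    · exact Or.inl ⟨h, hE⟩

theorem kvR_graft (hvmax : ∀ u ∈ T, u ≤ v) {w : List ℕ} :
    kv ((T \ {v}) ∪ (fun w => v ++ w) '' S) (v ++ w) = kv S w := by
  rw [kv, kv]
  congr 1
  ext i
  simp only [Set.mem_setOf_eq, Set.mem_union, Set.mem_diff, Set.mem_singleton_iff,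
    Set.mem_image]
  constructor
  · rintro (⟨h, _⟩ | ⟨w', hw', he⟩)
    · exfalso
      rw [List.append_assoc] at h
      exact ext_notin hvmax (by simp) h
    · rw [List.append_assoc] at he
      rw [← List.append_cancel_left he]
      exact hw'
  · intro h
    exact Or.inr ⟨w ++ [i], h, by simp [List.append_assoc]⟩

theorem rankR_mem (hvmax : ∀ u ∈ T, u ≤ v)
    {u : List ℕ} (hu : u ∈ T) (hne : u ≠ v) :
    rank ((T \ {v}) ∪ (fun w => v ++ w) '' S) u = rank T u := by
  have huv : u < v := lt_of_le_of_ne (hvmax u hu) hne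
  rw [rank, rank]
  congr 1
  ext x
  simp only [Set.mem_sep_iff, Set.mem_union, Set.mem_diff, Set.mem_singleton_iff,
    Set.mem_image]
  constructor
  · rintro ⟨⟨hx, _⟩ | ⟨w, hw, rfl⟩, hlt⟩
    · exact ⟨hx, hlt⟩
    · exfalso
      have : v ≤ v ++ w := prefix_le (List.prefix_append v w)
      exact absurd (this.trans_lt (hlt.trans huv)) (lt_irrefl v)
  · rintro ⟨hx, hlt⟩
    exact ⟨Or.inl ⟨hx, ne_of_lt (hlt.trans huv)⟩, hlt⟩

theorem rankR_graft (hv : v ∈ T) (hvmax : ∀ u ∈ T, u ≤ v) (hTfin : T.Finite)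
    (hSfin : S.Finite) {w : List ℕ} (hw : w ∈ S) :
    rank ((T \ {v}) ∪ (fun w => v ++ w) '' S) (v ++ w)
      = T.ncard - 1 + rank S w := by
  have hset : {x ∈ (T \ {v}) ∪ (fun w => v ++ w) '' S | x < v ++ w}
      = (T \ {v}) ∪ (fun w' => v ++ w') '' {w' ∈ S | w' < w} := by
    ext x
    simp only [Set.mem_sep_iff, Set.mem_union, Set.mem_diff, Set.mem_singleton_iff,
      Set.mem_image]
    constructor
    · rintro ⟨⟨hx, hne⟩ | ⟨w', hw', rfl⟩, hlt⟩
      · exact Or.inl ⟨hx, hne⟩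
      · exact Or.inr ⟨w', ⟨hw', (append_lt_append v w' w).1 hlt⟩, rfl⟩
    · rintro (⟨hx, hne⟩ | ⟨w', ⟨hw', hlt⟩, rfl⟩)
      · refine ⟨Or.inl ⟨hx, hne⟩, ?_⟩
        calc x < v := lt_of_le_of_ne (hvmax x hx) hne
        _ ≤ v ++ w := prefix_le (List.prefix_append v w)
      · exact ⟨Or.inr ⟨w', hw', rfl⟩, (append_lt_append v w' w).2 hlt⟩
  have hdisj : Disjoint (T \ {v}) ((fun w' => v ++ w') '' {w' ∈ S | w' < w}) := by
    rw [Set.disjoint_left]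
    rintro x ⟨hx, hne⟩ ⟨w', _, rfl⟩
    have h1 : v ++ w' ≤ v := hvmax _ hx
    have h2 : v ≤ v ++ w' := prefix_le (List.prefix_append v w')
    have h3 : v ++ w' = v := le_antisymm h1 h2
    exact hne h3
  have hinj : Set.InjOn (fun w' => v ++ w') {w' ∈ S | w' < w} :=
    fun a _ b _ h => List.append_cancel_left h
  rw [rank, hset, Set.ncard_union_eq hdisj (hTfin.diff)
    (((hSfin.subset (Set.sep_subset _ _)).image _)),
    Set.ncard_diff_singleton_of_mem hv, Set.ncard_image_of_injOn hinj, rank]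

end Graft

/-- Right-grafting and Lukaciewicz paths: if `v` is the rightmost leaf
of the finite plane tree `T` and `R = T ⊕ S` is obtained from `T` by identifying the
root of `S` with `v`, then the Lukaciewicz path of `R` is the concatenation of the
Lukaciewicz path of `T` stopped at `#T - 1` with the Lukaciewicz path of `S`. -/
theorem luk_right_graft (T S : Set (List ℕ)) (hT : IsPlaneTree T) (hS : IsPlaneTree S)
    (hTfin : T.Finite) (hSfin : S.Finite)
    (v : List ℕ) (hv : v ∈ T) (hvmax : ∀ u ∈ T, u ≤ v) :
    (∀ t : ℕ, t ≤ T.ncard - 1 →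
      luk ((T \ {v}) ∪ (fun w => v ++ w) '' S) t = luk T t) ∧
    (∀ t : ℕ, t ≤ S.ncard →
      luk ((T \ {v}) ∪ (fun w => v ++ w) '' S) (T.ncard - 1 + t)
        = luk T (T.ncard - 1) + luk S t) := by
  set R : Set (List ℕ) := (T \ {v}) ∪ (fun w => v ++ w) '' S with hR
  constructor
  · intro t ht
    have hset : {u ∈ R | rank R u < t} = {u ∈ T | rank T u < t} := by
      ext u
      simp only [Set.mem_sep_iff]
      constructor
      · rintro ⟨hmem, hlt⟩
        rcases hmem with ⟨hu, hne⟩ | ⟨w, hw, rfl⟩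
        · simp only [Set.mem_singleton_iff] at hne
          exact ⟨hu, by rwa [rankR_mem hvmax hu hne] at hlt⟩
        · exfalso
          rw [rankR_graft hv hvmax hTfin hSfin hw] at hlt
          omega
      · rintro ⟨hu, hlt⟩
        have hne : u ≠ v := by
          rintro rfl
          rw [rank_v hv hvmax hTfin] at hlt
          omega
        exact ⟨Or.inl ⟨hu, hne⟩, by rwa [rankR_mem hvmax hu hne]⟩
    simp only [luk]
    rw [hset]
    refine finsum_mem_congr rfl fun u hu => ?_
    simp only [Set.mem_sep_iff] at hu
    obtain ⟨hu1, hu2⟩ := hu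
    have hne : u ≠ v := by
      rintro rfl
      rw [rank_v hv hvmax hTfin] at hu2
      omega
    rw [kvR_mem hS.1 hv hvmax hu1 hne]
  · intro t _
    have hA : {u ∈ R | rank R u < T.ncard - 1 + t}
        = (T \ {v}) ∪ (fun w => v ++ w) '' {w ∈ S | rank S w < t} := by
      ext u
      simp only [Set.mem_sep_iff, Set.mem_union, Set.mem_diff, Set.mem_singleton_iff,
        Set.mem_image]
      constructor
      · rintro ⟨⟨hu, hne⟩ | ⟨w, hw, rfl⟩, hlt⟩
        · exact Or.inl ⟨hu, hne⟩
        · rw [rankR_graft hv hvmax hTfin hSfin hw] at hlt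
          exact Or.inr ⟨w, ⟨hw, by omega⟩, rfl⟩
      · rintro (⟨hu, hne⟩ | ⟨w, ⟨hw, hlt⟩, rfl⟩)
        · refine ⟨Or.inl ⟨hu, hne⟩, ?_⟩
          rw [rankR_mem hvmax hu hne]
          have := rank_lt_of_ne hv hvmax hTfin hu hne
          omega
        · refine ⟨Or.inr ⟨w, hw, rfl⟩, ?_⟩
          rw [rankR_graft hv hvmax hTfin hSfin hw]
          omega
    have hT1 : {u ∈ T | rank T u < T.ncard - 1} = T \ {v} := by
      ext u
      simp only [Set.mem_sep_iff, Set.mem_diff, Set.mem_singleton_iff]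
      constructor
      · rintro ⟨hu, hlt⟩
        refine ⟨hu, ?_⟩
        rintro rfl
        rw [rank_v hv hvmax hTfin] at hlt
        omega
      · rintro ⟨hu, hne⟩
        exact ⟨hu, rank_lt_of_ne hv hvmax hTfin hu hne⟩
    have hdisj : Disjoint (T \ {v}) ((fun w => v ++ w) '' {w ∈ S | rank S w < t}) := by
      rw [Set.disjoint_left]
      rintro x ⟨hx, hne⟩ ⟨w, _, rfl⟩
      exact hne (le_antisymm (hvmax _ hx) (prefix_le (List.prefix_append v w)))
    have hfin1 : (T \ {v}).Finite := hTfin.diff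
    have hfin2 : ((fun w => v ++ w) '' {w ∈ S | rank S w < t}).Finite :=
      (hSfin.subset (Set.sep_subset _ _)).image _
    have hinj : Set.InjOn (fun w => v ++ w) {w ∈ S | rank S w < t} :=
      fun a _ b _ h => List.append_cancel_left h
    calc luk R (T.ncard - 1 + t)
        = ∑ᶠ u ∈ (T \ {v}) ∪ (fun w => v ++ w) '' {w ∈ S | rank S w < t},
            ((kv R u : ℤ) - 1) := by
          simp only [luk]; rw [hA]
      _ = (∑ᶠ u ∈ T \ {v}, ((kv R u : ℤ) - 1))
          + ∑ᶠ u ∈ (fun w => v ++ w) '' {w ∈ S | rank S w < t}, ((kv R u : ℤ) - 1) :=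
          finsum_mem_union hdisj hfin1 hfin2
      _ = luk T (T.ncard - 1) + luk S t := by
          congr 1
          · calc ∑ᶠ u ∈ T \ {v}, ((kv R u : ℤ) - 1)
                = ∑ᶠ u ∈ T \ {v}, ((kv T u : ℤ) - 1) :=
                finsum_mem_congr rfl fun u hu => by
                  rw [kvR_mem hS.1 hv hvmax hu.1 (by simpa using hu.2)]
              _ = luk T (T.ncard - 1) := by simp only [luk]; rw [hT1]
          · calc ∑ᶠ u ∈ (fun w => v ++ w) '' {w ∈ S | rank S w < t}, ((kv R u : ℤ) - 1)
                = ∑ᶠ w ∈ {w ∈ S | rank S w < t}, ((kv R (v ++ w) : ℤ) - 1) :=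
                finsum_mem_image hinj
              _ = ∑ᶠ w ∈ {w ∈ S | rank S w < t}, ((kv S w : ℤ) - 1) :=
                finsum_mem_congr rfl fun w _ => by rw [kvR_graft hvmax]
              _ = luk S t := by simp only [luk]

end IPC
end

section
/- (Right description of the Lukaciewicz path.) Let θ be a finite plane tree with Lukaciewicz path V and lexicographic enumeration v⁰ < v¹ < … < v^{#θ−1} of its vertices. Then for every 0 ≤ k ≤ #θ − 1, V(k+1) = n(v^k, θ) − 1, where n(v, θ) is the number of edges of θ having exactly one endpoint in θ^v = {u ∈ θ : u ≤ v}. -/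
namespace IPC
private lemma lex_append_lt {u : List ℕ} {t : List ℕ} (ht : t ≠ []) : u < u ++ t := by
  show List.Lex (· < ·) u (u ++ t)
  induction u with
  | nil =>
    cases t with
    | nil => exact absurd rfl ht
    | cons a l => exact List.Lex.nil
  | cons a l ih => exact List.Lex.cons ih

private lemma prefix_lt {u w : List ℕ} (h : u <+: w) (hne : u ≠ w) : u < w := by
  obtain ⟨t, rfl⟩ := h
  refine lex_append_lt ?_
  rintro rfl
  simp at hne

/-- Right description of the Lukaciewicz path: if `v` is the vertex of
rank `k` in the lexicographic order of a finite plane tree `θ`, then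
`V(k+1) = n(v,θ) - 1`, where `n(v,θ)` counts the edges of `θ` with exactly one endpoint
in `θ^v = {u ∈ θ : u ≤ v}`. -/
theorem luk_right_description (θ : Set (List ℕ)) (hθ : IsPlaneTree θ) (hfin : θ.Finite)
    (k : ℕ) (hk : k + 1 ≤ θ.ncard) (v : List ℕ) (hv : v ∈ θ) (hrk : rank θ v = k) :
    luk θ (k + 1) = (nEdge θ v : ℤ) - 1 := by
  classical
  obtain ⟨hroot, hpref, -, -⟩ := hθ
  set Tf := hfin.toFinset with hTfdef
  have hmemT : ∀ x, x ∈ Tf ↔ x ∈ θ := fun x => hfin.mem_toFinset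
  set Bf : Finset (List ℕ) := Tf.filter (fun u => u ≤ v) with hBfdef
  have hmemB : ∀ x, x ∈ Bf ↔ x ∈ θ ∧ x ≤ v := by
    intro x; simp [hBfdef, hmemT]
  -- rank is strictly monotone on θ
  have hrank_mono : ∀ a ∈ θ, ∀ b ∈ θ, a < b → rank θ a < rank θ b := by
    intro a ha b hb hab
    have hsub : {u ∈ θ | u < a} ⊆ {u ∈ θ | u < b} :=
      fun w hw => ⟨hw.1, hw.2.trans hab⟩
    refine Set.ncard_lt_ncard ?_ (hfin.subset (fun w hw => hw.1))
    exact (Set.ssubset_iff_of_subset hsub).2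
      ⟨a, ⟨ha, hab⟩, fun h => lt_irrefl a h.2⟩
  have hset1 : {u ∈ θ | rank θ u < k + 1} = ↑Bf := by
    ext u
    simp only [Set.mem_setOf_eq, Finset.mem_coe, hmemB]
    constructor
    · rintro ⟨hu, hru⟩
      refine ⟨hu, ?_⟩
      by_contra hle
      push_neg at hle
      have := hrank_mono v hv u hu hle
      omega
    · rintro ⟨hu, hle⟩
      refine ⟨hu, ?_⟩
      rcases lt_or_eq_of_le hle with h | h
      · have := hrank_mono u hu v hv h; omega
      · subst h; omega
  have hluk : luk θ (k + 1) = ∑ u ∈ Bf, ((kv θ u : ℤ) - 1) := by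
    rw [luk, hset1, finsum_mem_coe_finset]
  -- kv as a fiber cardinality
  have hinj : ∀ u : List ℕ, Function.Injective (fun i : ℕ => u ++ [i]) := by
    intro u i j hij; simpa using hij
  have hkv : ∀ u : List ℕ,
      kv θ u = (Tf.filter (fun c => c ≠ [] ∧ c.dropLast = u)).card := by
    intro u
    have himg : (↑(Tf.filter (fun c => c ≠ [] ∧ c.dropLast = u)) : Set (List ℕ))
        = (fun i : ℕ => u ++ [i]) '' {i : ℕ | u ++ [i] ∈ θ} := by
      ext c
      simp only [Finset.coe_filter, Set.mem_setOf_eq, hmemT, Set.mem_image]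
      constructor
      · rintro ⟨hc, hne, hd⟩
        have he : u ++ [c.getLast hne] = c := by
          rw [← hd]; exact List.dropLast_append_getLast hne
        exact ⟨c.getLast hne, by rw [he]; exact hc, he⟩
      · rintro ⟨i, hi, rfl⟩
        exact ⟨hi, by simp, by simp⟩
    rw [kv, ← Set.ncard_coe_finset, himg, Set.ncard_image_of_injective _ (hinj u)]
  -- closure of below under parent
  have hne_dropLast : ∀ c : List ℕ, c ≠ [] → c.dropLast ≠ c := by
    intro c hne h
    have := congrArg List.length h
    rw [List.length_dropLast] at this
    have : c.length ≠ 0 := by simpa using hne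
    omega
  have hclosed : ∀ c ∈ θ, c ≠ [] → c ≤ v → c.dropLast ∈ below θ v := by
    intro c hc hne hle
    refine ⟨hpref c hc _ (List.dropLast_prefix c), ?_⟩
    exact le_of_lt (lt_of_lt_of_le
      (prefix_lt (List.dropLast_prefix c) (hne_dropLast c hne)) hle)
  have hmem_below : ∀ x, x ∈ below θ v ↔ x ∈ θ ∧ x ≤ v := fun x => Iff.rfl
  -- the three edge sets
  set A : Finset (List ℕ) :=
    Tf.filter (fun c => c ≠ [] ∧ c.dropLast ∈ below θ v) with hAdef
  have hmemA : ∀ c, c ∈ A ↔ c ∈ θ ∧ c ≠ [] ∧ c.dropLast ∈ below θ v := by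
    intro c; simp [hAdef, hmemT, and_assoc]
  set N : Finset (List ℕ) :=
    Tf.filter (fun c => c ≠ [] ∧ Xor' (c.dropLast ∈ below θ v) (c ∈ below θ v))
    with hNdef
  -- A.card = ∑ kv
  have hA : A.card = ∑ u ∈ Bf, kv θ u := by
    rw [Finset.card_eq_sum_card_fiberwise (f := List.dropLast) (t := Bf)
      (fun c hc => by
        obtain ⟨hcθ, hcne, hd⟩ := (hmemA c).1 hc
        exact (hmemB _).2 ⟨hd.1, hd.2⟩)]
    refine Finset.sum_congr rfl (fun u hu => ?_)
    rw [hkv u]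
    congr 1
    ext c
    simp only [Finset.mem_filter, hmemA c, hmemT]
    constructor
    · rintro ⟨⟨hc, hne, hb⟩, hd⟩; exact ⟨hc, hne, hd⟩
    · rintro ⟨hc, hne, hd⟩
      exact ⟨⟨hc, hne, hd ▸ (by
        obtain ⟨h1, h2⟩ := (hmemB u).1 hu; exact ⟨h1, h2⟩)⟩, hd⟩
  -- split A
  have hroot_mem : ([] : List ℕ) ∈ Bf := by
    refine (hmemB _).2 ⟨hroot, ?_⟩
    rcases eq_or_ne ([] : List ℕ) v with h | h
    · exact h.le
    · exact (prefix_lt (List.nil_prefix) h).le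
  have hsplit1 : A.filter (fun c => c ∈ below θ v) = Bf.erase [] := by
    ext c
    simp only [Finset.mem_filter, Finset.mem_erase, hmemA c, hmemB c, hmem_below]
    constructor
    · rintro ⟨⟨hc, hne, -⟩, hcb, hle⟩; exact ⟨hne, hc, hle⟩
    · rintro ⟨hne, hc, hle⟩
      exact ⟨⟨hc, hne, hclosed c hc hne hle⟩, hc, hle⟩
  have hsplit2 : A.filter (fun c => ¬ c ∈ below θ v) = N := by
    ext c
    simp only [Finset.mem_filter, hmemA c, hNdef, hmemT]
    constructor
    · rintro ⟨⟨hc, hne, hd⟩, hnb⟩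
      exact ⟨hc, hne, Or.inl ⟨hd, hnb⟩⟩
    · rintro ⟨hc, hne, hx⟩
      rcases hx with ⟨hd, hnb⟩ | ⟨hb, hnd⟩
      · exact ⟨⟨hc, hne, hd⟩, hnb⟩
      · exact absurd (hclosed c hc hne hb.2) hnd
  have hcardA : A.card = N.card + (Bf.erase []).card := by
    rw [← hsplit1, ← hsplit2, add_comm]
    exact (Finset.card_filter_add_card_filter_not _).symm
  have hcardB : (Bf.erase []).card + 1 = Bf.card :=
    Finset.card_erase_add_one hroot_mem
  -- nEdge = N.card
  have hN : nEdge θ v = N.card := by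
    rw [nEdge, ← Set.ncard_coe_finset]
    congr 1
    ext c
    simp only [Finset.coe_filter, Set.mem_setOf_eq, hNdef, hmemT]
  -- put everything together
  have hsum : (∑ u ∈ Bf, ((kv θ u : ℤ) - 1)) = (A.card : ℤ) - Bf.card := by
    rw [Finset.sum_sub_distrib, Finset.sum_const, nsmul_eq_mul, mul_one, hA]
    push_cast
    ring
  rw [hluk, hsum, hN]
  omega

end IPC
end

section
/- Let (θ_n)_{n≥0} be a sequence of finite plane trees, and let T be the sin-tree whose backbone BB is its rightmost branch and such that, for every n, the subtree consisting of BB_n together with all its descendants that are not descendants of BB_{n+1} is a copy of θ_n rooted at BB_n (i.e. the root of θ_n is identified with BB_n, its children being inserted before the backbone child BB_{n+1}). Let U be the Lukaciewicz path of the sequence (θ_n), i.e. U(n) = Σ_{i<n} (k_{u^i} − 1) where u⁰, u¹, … enumerates all vertices of θ_0 in lexicographic order, then all vertices of θ_1, and so on, and where k_{u^i} is the number of children of u^i in its own tree. Let V be the Lukaciewicz path of T. Then for every n ≥ 0, V(n) = U(n) + 1 − U̲(n−1), where U̲(m) = min_{0≤i≤m} U(i) and by convention U̲(−1) = 1. 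-/
namespace IPC
/-- number of children of the root. -/
noncomputable def rootDeg (θ : Set (List ℕ)) : ℕ := kv θ []

/-- Address of the `n`-th backbone vertex of the sin-tree obtained by identifying the
root of `θ n` with the `n`-th backbone vertex, the backbone child coming last. -/
noncomputable def bbGlue (θ : ℕ → Set (List ℕ)) : ℕ → List ℕ
  | 0 => []
  | n + 1 => bbGlue θ n ++ [rootDeg (θ n) + 1]

/-- The sin-tree whose backbone is its rightmost branch and in which the subtree made of
`BB_n` and its descendants that are not descendants of `BB_{n+1}` is a copy of `θ n`. -/
noncomputable def glueTree (θ : ℕ → Set (List ℕ)) : Set (List ℕ) :=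
  ⋃ n, (fun w => bbGlue θ n ++ w) '' θ n

/-- Rank of a vertex `p.2 ∈ θ p.1` in the concatenated enumeration of the sequence of
trees `θ 0, θ 1, …` (all vertices of `θ 0` in lexicographic order, then those of
`θ 1`, and so on). -/
noncomputable def seqRank (θ : ℕ → Set (List ℕ)) (p : ℕ × List ℕ) : ℕ :=
  (∑ i ∈ Finset.range p.1, (θ i).ncard) + rank (θ p.1) p.2

/-- Lukaciewicz path `U` of the sequence of trees `(θ n)`:
`U(n) = ∑_{i<n} (k_{uⁱ} - 1)` along the concatenated enumeration. -/
noncomputable def seqLuk (θ : ℕ → Set (List ℕ)) (n : ℕ) : ℤ :=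
  ∑ᶠ p ∈ {q : ℕ × List ℕ | q.2 ∈ θ q.1 ∧ seqRank θ q < n},
    ((kv (θ p.1) p.2 : ℤ) - 1)

/-! ### list order lemmas -/
lemma list_lt_iff (u v : List ℕ) : u < v ↔ List.Lex (·<·) u v := Iff.rfl

lemma append_lt_append_left {u v : List ℕ} (a : List ℕ) (h : u < v) : a ++ u < a ++ v :=
  List.Lex.append_left _ h a

lemma lt_of_append_lt_append_left {u v a : List ℕ} (h : a ++ u < a ++ v) : u < v := by
  rcases lt_trichotomy u v with h' | rfl | h'
  · exact h'
  · exact absurd h (lt_irrefl _)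
  · exact absurd (append_lt_append_left a h') (asymm h)

lemma prefix_le_s3 {u v : List ℕ} (h : u <+: v) : u ≤ v := by
  obtain ⟨t, rfl⟩ := h
  cases t with
  | nil => simp
  | cons a t =>
    refine le_of_lt ?_
    have : u ++ ([] : List ℕ) < u ++ (a :: t) := append_lt_append_left u (List.nil_lt_cons a t)
    simpa using this

lemma strict_prefix_lt {u v : List ℕ} (h : u <+: v) (hne : u ≠ v) : u < v :=
  lt_of_le_of_ne (prefix_le_s3 h) hne

/-! ### basic tree lemmas -/

lemma childSet_finite {T : Set (List ℕ)} (hfin : T.Finite) (v : List ℕ) :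
    {i : ℕ | v ++ [i] ∈ T}.Finite := by
  have : {i : ℕ | v ++ [i] ∈ T} = (fun i => v ++ [i]) ⁻¹' T := rfl
  rw [this]
  exact hfin.preimage (fun a _ b _ h => by simpa using List.append_cancel_left h)

lemma mem_child_le {T : Set (List ℕ)} (hT : IsPlaneTree T) (hfin : T.Finite)
    {v : List ℕ} {i : ℕ} (h : v ++ [i] ∈ T) : i ≤ kv T v := by
  have hsub : (Set.Icc 1 i) ⊆ {j : ℕ | v ++ [j] ∈ T} := by
    rintro j ⟨h1, h2⟩
    exact hT.2.2.1 v i j h h1 h2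
  have := Set.ncard_le_ncard hsub (childSet_finite hfin v)
  calc i = (Set.Icc 1 i).ncard := by
          rw [← Finset.coe_Icc, Set.ncard_coe_finset, Nat.card_Icc]; omega
    _ ≤ _ := this

lemma childSet_eq_Icc {T : Set (List ℕ)} (hT : IsPlaneTree T) (hfin : T.Finite)
    (v : List ℕ) : {i : ℕ | v ++ [i] ∈ T} = Set.Icc 1 (kv T v) := by
  have hsub : {i : ℕ | v ++ [i] ∈ T} ⊆ Set.Icc 1 (kv T v) := by
    intro i hi
    exact ⟨hT.2.2.2 _ hi i (by simp), mem_child_le hT hfin hi⟩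
  refine Set.eq_of_subset_of_ncard_le hsub ?_ (by
    rw [← Finset.coe_Icc]; exact (Finset.Icc 1 (kv T v)).finite_toSet)
  rw [← Finset.coe_Icc, Set.ncard_coe_finset, Nat.card_Icc]
  simp [kv]

lemma rank_nil (T : Set (List ℕ)) : rank T [] = 0 := by
  have : {u ∈ T | u < []} = ∅ := by
    ext u; simp only [Set.mem_setOf_eq, Set.mem_empty_iff_false, iff_false, not_and]
    intro _; exact List.not_lex_nil
  simp [rank, this]

lemma rank_lt_ncard {T : Set (List ℕ)} (hfin : T.Finite) {v : List ℕ} (hv : v ∈ T) :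
    rank T v < T.ncard := by
  refine Set.ncard_lt_ncard ?_ hfin
  constructor
  · intro u hu; exact hu.1
  · intro hsub
    exact absurd (hsub hv).2 (lt_irrefl _)

lemma rank_strictMonoOn {T : Set (List ℕ)} (hfin : T.Finite) {u v : List ℕ}
    (hu : u ∈ T) (huv : u < v) : rank T u < rank T v := by
  refine Set.ncard_lt_ncard ⟨fun w hw => ⟨hw.1, hw.2.trans huv⟩, fun hsub => ?_⟩
    (hfin.subset (fun w hw => hw.1))
  exact absurd (hsub ⟨hu, huv⟩).2 (lt_irrefl _)

lemma rank_injOn {T : Set (List ℕ)} (hfin : T.Finite) : Set.InjOn (rank T) T := by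
  intro u hu v hv h
  rcases lt_trichotomy u v with h' | h' | h'
  · exact absurd h (rank_strictMonoOn hfin hu h').ne
  · exact h'
  · exact absurd h.symm (rank_strictMonoOn hfin hv h').ne


/-! ### sums of kv over finsets of vertices -/

lemma kv_eq_card_childrenF {T : Set (List ℕ)} (hT : IsPlaneTree T) (hfin : T.Finite)
    (v : List ℕ) :
    kv T v = (hfin.toFinset.filter (fun c => c ≠ [] ∧ c.dropLast = v)).card := by
  have himg : (fun i => v ++ [i]) '' {i : ℕ | v ++ [i] ∈ T}
      = ↑(hfin.toFinset.filter (fun c => c ≠ [] ∧ c.dropLast = v)) := by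
    ext c
    simp only [Set.mem_image, Set.mem_setOf_eq, Finset.coe_filter, Set.Finite.mem_toFinset,
      Set.mem_setOf_eq]
    constructor
    · rintro ⟨i, hi, rfl⟩
      exact ⟨hi, by simp, List.dropLast_concat⟩
    · rintro ⟨hc, hne, hdrop⟩
      subst hdrop
      exact ⟨c.getLast hne, by rwa [List.dropLast_append_getLast hne], by
        rw [List.dropLast_append_getLast hne]⟩
  have := congrArg Set.ncard himg
  rwa [Set.ncard_image_of_injOn (fun a _ b _ h => by simpa using List.append_cancel_left h),
    Set.ncard_coe_finset] at this

lemma sum_kv_eq {T : Set (List ℕ)} (hT : IsPlaneTree T) (hfin : T.Finite)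
    (G : Finset (List ℕ)) :
    ∑ v ∈ G, kv T v
      = (hfin.toFinset.filter (fun c => c ≠ [] ∧ c.dropLast ∈ G)).card := by
  have hbi : hfin.toFinset.filter (fun c => c ≠ [] ∧ c.dropLast ∈ G)
      = G.biUnion (fun v => hfin.toFinset.filter (fun c => c ≠ [] ∧ c.dropLast = v)) := by
    ext c
    simp only [Finset.mem_filter, Finset.mem_biUnion]
    constructor
    · rintro ⟨hc, hne, hd⟩; exact ⟨c.dropLast, hd, hc, hne, rfl⟩
    · rintro ⟨v, hv, hc, hne, rfl⟩; exact ⟨hc, hne, hv⟩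
  rw [hbi, Finset.card_biUnion]
  · exact Finset.sum_congr rfl (fun v _ => kv_eq_card_childrenF hT hfin v)
  · intro u _ v _ huv
    simp only [Finset.disjoint_left, Finset.mem_filter]
    rintro c ⟨_, _, rfl⟩ ⟨_, _, h⟩
    exact huv h

lemma dropLast_mem {T : Set (List ℕ)} (hT : IsPlaneTree T) {c : List ℕ}
    (hc : c ∈ T) (hne : c ≠ []) : c.dropLast ∈ T :=
  hT.2.1 c hc _ ⟨[c.getLast hne], List.dropLast_append_getLast hne⟩

lemma card_filter_rank {T : Set (List ℕ)} (hfin : T.Finite)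
    (p : ℕ → Prop) [DecidablePred p] :
    (hfin.toFinset.filter (fun v => p (rank T v))).card
      = ((Finset.range T.ncard).filter p).card := by
  classical
  set F := hfin.toFinset with hF
  have hcardF : F.card = T.ncard := by rw [hF, ← Set.ncard_eq_toFinset_card T hfin]
  have hinj : Set.InjOn (rank T) ↑F := by
    intro u hu v hv h
    exact rank_injOn hfin (by simpa [hF] using hu) (by simpa [hF] using hv) h
  have himage : F.image (rank T) = Finset.range T.ncard := by
    apply Finset.eq_of_subset_of_card_le
    · intro r hr
      obtain ⟨v, hv, rfl⟩ := Finset.mem_image.mp hr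
      exact Finset.mem_range.mpr (rank_lt_ncard hfin (by simpa [hF] using hv))
    · rw [Finset.card_range, ← hcardF]
      exact le_of_eq (Finset.card_image_of_injOn hinj).symm
  have h2 : (F.filter (fun v => p (rank T v))).image (rank T)
      = (Finset.range T.ncard).filter p := by
    rw [← himage, Finset.filter_image]
  calc (F.filter (fun v => p (rank T v))).card
      = ((F.filter (fun v => p (rank T v))).image (rank T)).card :=
        (Finset.card_image_of_injOn (hinj.mono (by rw [Finset.coe_filter]; exact fun x hx => hx.1))).symm
    _ = _ := by rw [h2]

lemma luk_eq_sum_filter {T : Set (List ℕ)} (hfin : T.Finite) (n : ℕ) :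
    luk T n = ∑ v ∈ hfin.toFinset.filter (fun v => rank T v < n), ((kv T v : ℤ) - 1) := by
  rw [luk, ← finsum_mem_coe_finset]
  congr 1
  ext v
  simp [Set.Finite.mem_toFinset]

lemma luk_ge (hT : IsPlaneTree T) (hfin : T.Finite) {j : ℕ} (hj : j < T.ncard) :
    0 ≤ luk T j := by
  classical
  rw [luk_eq_sum_filter hfin]
  set Fj := hfin.toFinset.filter (fun v => rank T v < j) with hFj
  have hcardFj : Fj.card = j := by
    rw [hFj, card_filter_rank hfin (· < j)]
    have : (Finset.range T.ncard).filter (· < j) = Finset.range j := by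
      ext r; simp only [Finset.mem_filter, Finset.mem_range]; omega
    rw [this, Finset.card_range]
  have hsumkv : j ≤ ∑ v ∈ Fj, kv T v := by
    rw [sum_kv_eq hT hfin]
    have hsubset : hfin.toFinset.filter (fun v => 1 ≤ rank T v ∧ rank T v < j + 1)
        ⊆ hfin.toFinset.filter (fun c => c ≠ [] ∧ c.dropLast ∈ Fj) := by
      intro c hc
      rw [Finset.mem_filter] at hc ⊢
      obtain ⟨hcF, h1, h2⟩ := hc
      have hcT : c ∈ T := by simpa using hcF
      have hne : c ≠ [] := by
        rintro rfl; rw [rank_nil] at h1; omega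
      have hdropT : c.dropLast ∈ T := dropLast_mem hT hcT hne
      have hdlt : c.dropLast < c :=
        strict_prefix_lt ⟨[c.getLast hne], List.dropLast_append_getLast hne⟩
          (by
            intro h
            have hl := congrArg List.length h
            rw [List.length_dropLast] at hl
            have := List.length_pos_iff.mpr hne
            omega)
      have : rank T c.dropLast < rank T c := rank_strictMonoOn hfin hdropT hdlt
      refine ⟨hcF, hne, ?_⟩
      rw [hFj, Finset.mem_filter]
      exact ⟨by simpa using hdropT, by omega⟩
    calc j = (hfin.toFinset.filter (fun v => 1 ≤ rank T v ∧ rank T v < j + 1)).card := by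
            rw [card_filter_rank hfin (fun r => 1 ≤ r ∧ r < j + 1)]
            have : (Finset.range T.ncard).filter (fun r => 1 ≤ r ∧ r < j + 1)
                = Finset.Icc 1 j := by
              ext r; simp only [Finset.mem_filter, Finset.mem_range, Finset.mem_Icc]; omega
            rw [this, Nat.card_Icc]; omega
      _ ≤ _ := Finset.card_le_card hsubset
  have : ∑ v ∈ Fj, ((kv T v : ℤ) - 1) = (∑ v ∈ Fj, (kv T v : ℤ)) - Fj.card := by
    rw [Finset.sum_sub_distrib]; simp
  rw [this, hcardFj]
  push_cast
  have : (j : ℤ) ≤ ∑ v ∈ Fj, (kv T v : ℤ) := by exact_mod_cast hsumkv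
  omega

lemma luk_full (hT : IsPlaneTree T) (hfin : T.Finite) {n : ℕ} (hn : T.ncard ≤ n) :
    luk T n = -1 := by
  classical
  rw [luk_eq_sum_filter hfin]
  have hfull : hfin.toFinset.filter (fun v => rank T v < n) = hfin.toFinset := by
    apply Finset.filter_true_of_mem
    intro v hv
    exact lt_of_lt_of_le (rank_lt_ncard hfin (by simpa using hv)) hn
  rw [hfull]
  have hsum : ∑ v ∈ hfin.toFinset, kv T v = T.ncard - 1 := by
    rw [sum_kv_eq hT hfin]
    have : hfin.toFinset.filter (fun c => c ≠ [] ∧ c.dropLast ∈ hfin.toFinset)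
        = hfin.toFinset.filter (fun c => c ≠ []) := by
      apply Finset.filter_congr
      intro c hc
      have hcT : c ∈ T := by simpa using hc
      simp only [and_iff_left_iff_imp]
      intro hne
      simpa using dropLast_mem hT hcT hne
    rw [this]
    have hroot : hfin.toFinset.filter (fun c => ¬ c ≠ []) = {([] : List ℕ)} := by
      ext c
      simp only [Finset.mem_filter, Finset.mem_singleton, not_not, Set.Finite.mem_toFinset]
      constructor
      · rintro ⟨_, rfl⟩; rfl
      · rintro rfl; exact ⟨hT.1, rfl⟩
    have := Finset.card_filter_add_card_filter_not
      (s := hfin.toFinset) (p := fun c => c ≠ [])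
    rw [hroot] at this
    simp only [Finset.card_singleton] at this
    rw [Set.ncard_eq_toFinset_card T hfin]
    omega
  have hpos : 1 ≤ T.ncard := by
    have := (Set.ncard_pos hfin).mpr ⟨[], hT.1⟩; omega
  have hcard : hfin.toFinset.card = T.ncard := (Set.ncard_eq_toFinset_card T hfin).symm
  rw [Finset.sum_sub_distrib]
  rw [Finset.sum_const, nsmul_eq_mul, mul_one, hcard]
  have : (∑ v ∈ hfin.toFinset, (kv T v : ℤ)) = (T.ncard : ℤ) - 1 := by
    rw [← Nat.cast_sum, hsum]
    push_cast [hpos]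
    omega
  rw [this]
  ring



/-! ### glue structure lemmas -/

section Glue
variable {θ : ℕ → Set (List ℕ)}

/-- partial sums of tree sizes -/
noncomputable def Sfun (θ : ℕ → Set (List ℕ)) (m : ℕ) : ℕ :=
  ∑ i ∈ Finset.range m, (θ i).ncard

lemma mem_glueTree_iff {v : List ℕ} :
    v ∈ glueTree θ ↔ ∃ m u, u ∈ θ m ∧ v = bbGlue θ m ++ u := by
  simp only [glueTree, Set.mem_iUnion, Set.mem_image]
  constructor
  · rintro ⟨m, u, hu, rfl⟩; exact ⟨m, u, hu, rfl⟩
  · rintro ⟨m, u, hu, rfl⟩; exact ⟨m, u, hu, rfl⟩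

lemma glue_mem {n : ℕ} {u : List ℕ} (hu : u ∈ θ n) : bbGlue θ n ++ u ∈ glueTree θ :=
  mem_glueTree_iff.mpr ⟨n, u, hu, rfl⟩

lemma bb_prefix_le {m n : ℕ} (h : m ≤ n) : bbGlue θ m <+: bbGlue θ n := by
  induction n with
  | zero => rw [Nat.le_zero.mp h]
  | succ n ih =>
    rcases Nat.lt_or_ge m (n+1) with h' | h'
    · exact (ih (by omega)).trans ⟨[rootDeg (θ n) + 1], rfl⟩
    · have : m = n + 1 := by omega
      rw [this]

lemma bb_prefix_lt {m n : ℕ} (h : m < n) :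
    bbGlue θ m ++ [rootDeg (θ m) + 1] <+: bbGlue θ n :=
  bb_prefix_le (show m + 1 ≤ n from h)

variable (hθ : ∀ n, IsPlaneTree (θ n)) (hfin : ∀ n, (θ n).Finite)
include hθ hfin

lemma head_le {m : ℕ} {i : ℕ} {t : List ℕ} (hu : i :: t ∈ θ m) :
    1 ≤ i ∧ i ≤ rootDeg (θ m) := by
  have hi : [i] ∈ θ m := (hθ m).2.1 _ hu [i] ⟨t, rfl⟩
  have : ([] : List ℕ) ++ [i] ∈ θ m := by simpa using hi
  exact ⟨(hθ m).2.2.2 _ hi i (by simp), mem_child_le (hθ m) (hfin m) this⟩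

lemma glue_decode {m n : ℕ} {u x : List ℕ} (hu : u ∈ θ m)
    (h : bbGlue θ m ++ u = bbGlue θ n ++ x)
    (hx : ∀ i t, x = i :: t → i ≤ rootDeg (θ n)) : m = n ∧ u = x := by
  rcases lt_trichotomy m n with hmn | rfl | hmn
  · exfalso
    have hp : bbGlue θ m ++ [rootDeg (θ m) + 1] <+: bbGlue θ m ++ u := by
      rw [h]
      exact (bb_prefix_lt hmn).trans ⟨x, rfl⟩
    obtain ⟨t, ht⟩ := (List.prefix_append_right_inj _).mp hp
    have : (rootDeg (θ m) + 1) :: t ∈ θ m := by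
      rw [show (rootDeg (θ m) + 1) :: t = [rootDeg (θ m) + 1] ++ t from rfl, ht]
      exact hu
    have := (head_le hθ hfin this).2
    omega
  · exact ⟨rfl, List.append_cancel_left h⟩
  · exfalso
    have hp : bbGlue θ n ++ [rootDeg (θ n) + 1] <+: bbGlue θ n ++ x := by
      rw [← h]
      exact (bb_prefix_lt hmn).trans ⟨u, rfl⟩
    obtain ⟨t, ht⟩ := (List.prefix_append_right_inj _).mp hp
    have := hx (rootDeg (θ n) + 1) t ht.symm
    omega

lemma glue_injOn :
    Set.InjOn (fun q : ℕ × List ℕ => bbGlue θ q.1 ++ q.2) {q | q.2 ∈ θ q.1} := by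
  rintro ⟨m, u⟩ hu ⟨n, x⟩ hx h
  simp only [Set.mem_setOf_eq] at hu hx
  have hxhead : ∀ i t, x = i :: t → i ≤ rootDeg (θ n) := by
    intro i t hit
    rw [hit] at hx
    exact (head_le hθ hfin hx).2
  obtain ⟨h1, h2⟩ := glue_decode hθ hfin hu h hxhead
  simp [h1, h2]

lemma kv_glue_ne {n : ℕ} {w : List ℕ} (hw : w ∈ θ n) (hne : w ≠ []) :
    kv (glueTree θ) (bbGlue θ n ++ w) = kv (θ n) w := by
  have hset : {i : ℕ | (bbGlue θ n ++ w) ++ [i] ∈ glueTree θ}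
      = {i : ℕ | w ++ [i] ∈ θ n} := by
    ext i
    simp only [Set.mem_setOf_eq]
    constructor
    · intro hi
      rw [List.append_assoc] at hi
      obtain ⟨m, u, hu, hv⟩ := mem_glueTree_iff.mp hi
      obtain ⟨i', t', rfl⟩ : ∃ i' t', w = i' :: t' := by
        cases w with
        | nil => exact absurd rfl hne
        | cons a b => exact ⟨a, b, rfl⟩
      obtain ⟨h1, h2⟩ := glue_decode hθ hfin hu hv.symm
        (fun j t hjt => by
          rw [List.cons_append] at hjt
          obtain ⟨rfl, -⟩ := List.cons.injEq .. ▸ (List.cons.inj hjt)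
          exact (head_le hθ hfin hw).2)
      rw [h1, h2] at hu
      exact hu
    · intro hi
      rw [List.append_assoc]
      exact glue_mem hi
  rw [kv, kv, hset]

lemma kv_glue_nil (n : ℕ) :
    kv (glueTree θ) (bbGlue θ n) = rootDeg (θ n) + 1 := by
  have hset : {i : ℕ | bbGlue θ n ++ [i] ∈ glueTree θ}
      = Set.Icc 1 (rootDeg (θ n) + 1) := by
    ext i
    simp only [Set.mem_setOf_eq, Set.mem_Icc]
    constructor
    · intro hi
      obtain ⟨m, u, hu, hv⟩ := mem_glueTree_iff.mp hi
      rcases lt_trichotomy m n with hmn | rfl | hmn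
      · exfalso
        have hp : bbGlue θ m ++ [rootDeg (θ m) + 1] <+: bbGlue θ m ++ u := by
          rw [← hv]
          exact (bb_prefix_lt hmn).trans ⟨[i], rfl⟩
        obtain ⟨t, ht⟩ := (List.prefix_append_right_inj _).mp hp
        have : (rootDeg (θ m) + 1) :: t ∈ θ m := by
          rw [show (rootDeg (θ m) + 1) :: t = [rootDeg (θ m) + 1] ++ t from rfl, ht]
          exact hu
        have := (head_le hθ hfin this).2
        omega
      · have hu2 : u = [i] := List.append_cancel_left hv.symm
        rw [hu2] at hu
        have := head_le hθ hfin hu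
        omega
      · have hp : bbGlue θ n ++ [rootDeg (θ n) + 1] <+: bbGlue θ n ++ [i] := by
          rw [hv]
          exact (bb_prefix_lt hmn).trans ⟨u, rfl⟩
        obtain ⟨t, ht⟩ := (List.prefix_append_right_inj _).mp hp
        have h1 : rootDeg (θ n) + 1 = i := by
          have := List.cons.inj ht
          exact this.1
        omega
    · rintro ⟨h1, h2⟩
      rcases Nat.lt_or_ge i (rootDeg (θ n) + 1) with h' | h'
      · have : i ∈ Set.Icc 1 (kv (θ n) []) := ⟨h1, by
          have : i ≤ rootDeg (θ n) := by omega
          exact this⟩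
        rw [← childSet_eq_Icc (hθ n) (hfin n) []] at this
        simp only [Set.mem_setOf_eq, List.nil_append] at this
        exact glue_mem this
      · have hieq : i = rootDeg (θ n) + 1 := by omega
        have : bbGlue θ n ++ [i] = bbGlue θ (n+1) ++ [] := by
          simp [bbGlue, hieq]
        rw [this]
        exact glue_mem (hθ (n+1)).1
  rw [kv, hset, ← Finset.coe_Icc, Set.ncard_coe_finset, Nat.card_Icc]
  omega

/-! ### order lemmas for the glued tree -/

lemma glue_lt_of_fst_lt {m n : ℕ} {u : List ℕ} (hu : u ∈ θ m) (hmn : m < n)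
    (x : List ℕ) : bbGlue θ m ++ u < bbGlue θ n ++ x := by
  obtain ⟨r, hr⟩ := bb_prefix_lt (θ := θ) hmn
  have hbn : bbGlue θ n ++ x = bbGlue θ m ++ ((rootDeg (θ m) + 1) :: (r ++ x)) := by
    rw [← hr]; simp
  rw [hbn]
  apply append_lt_append_left
  rw [list_lt_iff]
  cases u with
  | nil => exact List.Lex.nil
  | cons i t =>
    have := (head_le hθ hfin hu).2
    exact List.Lex.rel (by omega)

end Glue

/-! ### the set `Bset` of pairs with first coordinate `< n` -/

def Bset (θ : ℕ → Set (List ℕ)) (n : ℕ) : Set (ℕ × List ℕ) :=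
  {q : ℕ × List ℕ | q.2 ∈ θ q.1 ∧ q.1 < n}

lemma Bset_zero (θ : ℕ → Set (List ℕ)) : Bset θ 0 = ∅ := by
  ext q; simp [Bset]

lemma Bset_succ (θ : ℕ → Set (List ℕ)) (n : ℕ) :
    Bset θ (n+1) = Bset θ n ∪ Prod.mk n '' θ n := by
  ext ⟨m, u⟩
  simp only [Bset, Set.mem_setOf_eq, Set.mem_union, Set.mem_image, Prod.mk.injEq]
  constructor
  · rintro ⟨hu, hm⟩
    rcases Nat.lt_or_ge m n with h | h
    · exact Or.inl ⟨hu, h⟩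
    · have : m = n := by omega
      exact Or.inr ⟨u, by rw [← this]; exact ⟨hu, rfl, rfl⟩⟩
  · rintro (⟨hu, hm⟩ | ⟨w, hw, rfl, rfl⟩)
    · exact ⟨hu, by omega⟩
    · exact ⟨hw, by omega⟩

lemma Bset_disjoint (θ : ℕ → Set (List ℕ)) (n : ℕ) :
    Disjoint (Bset θ n) (Prod.mk n '' θ n) := by
  rw [Set.disjoint_left]
  rintro ⟨m, u⟩ ⟨_, hm⟩ ⟨w, _, heq⟩
  obtain ⟨rfl, -⟩ := Prod.mk.inj heq
  exact absurd hm (lt_irrefl _)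

lemma Bset_finite {θ : ℕ → Set (List ℕ)} (hfin : ∀ n, (θ n).Finite) (n : ℕ) :
    (Bset θ n).Finite := by
  induction n with
  | zero => rw [Bset_zero]; exact Set.finite_empty
  | succ n ih =>
    rw [Bset_succ]
    exact ih.union ((hfin n).image _)

lemma ncard_Bset {θ : ℕ → Set (List ℕ)} (hfin : ∀ n, (θ n).Finite) (n : ℕ) :
    (Bset θ n).ncard = Sfun θ n := by
  induction n with
  | zero => rw [Bset_zero]; simp [Sfun]
  | succ n ih =>
    rw [Bset_succ, Set.ncard_union_eq (Bset_disjoint θ n) (Bset_finite hfin n)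
      ((hfin n).image _), ih,
      Set.ncard_image_of_injOn (Set.injOn_of_injective (fun a b h => (Prod.mk.inj h).2))]
    simp [Sfun, Finset.sum_range_succ]

lemma Sfun_ge {θ : ℕ → Set (List ℕ)} (hθ : ∀ n, IsPlaneTree (θ n))
    (hfin : ∀ n, (θ n).Finite) (m : ℕ) : m ≤ Sfun θ m := by
  induction m with
  | zero => simp [Sfun]
  | succ m ih =>
    rw [Sfun, Finset.sum_range_succ]
    have : 0 < (θ m).ncard := (Set.ncard_pos (hfin m)).mpr ⟨[], (hθ m).1⟩
    have := ih
    rw [Sfun] at this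
    omega

lemma Sfun_mono {θ : ℕ → Set (List ℕ)} {m n : ℕ} (h : m ≤ n) : Sfun θ m ≤ Sfun θ n := by
  unfold Sfun
  exact Finset.sum_le_sum_of_subset (Finset.range_subset_range.mpr h)

lemma Sfun_succ (θ : ℕ → Set (List ℕ)) (m : ℕ) :
    Sfun θ (m+1) = Sfun θ m + (θ m).ncard := Finset.sum_range_succ _ _


lemma seqRank_eq (θ : ℕ → Set (List ℕ)) (m : ℕ) (u : List ℕ) :
    seqRank θ (m, u) = Sfun θ m + rank (θ m) u := rfl

lemma luk_zero (T : Set (List ℕ)) : luk T 0 = 0 := by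
  rw [luk]
  have : {u ∈ T | rank T u < 0} = ∅ := by ext u; simp
  rw [this, finsum_mem_empty]

section Glue2
variable {θ : ℕ → Set (List ℕ)}
variable (hθ : ∀ n, IsPlaneTree (θ n)) (hfin : ∀ n, (θ n).Finite)
include hθ hfin

lemma rank_glue {n : ℕ} {w : List ℕ} (hw : w ∈ θ n) :
    rank (glueTree θ) (bbGlue θ n ++ w) = seqRank θ (n, w) := by
  have hA : {u ∈ glueTree θ | u < bbGlue θ n ++ w}
      = (fun q : ℕ × List ℕ => bbGlue θ q.1 ++ q.2) ''
        (Bset θ n ∪ Prod.mk n '' {w' ∈ θ n | w' < w}) := by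
    ext v
    simp only [Set.mem_setOf_eq, Set.mem_image, Set.mem_union]
    constructor
    · rintro ⟨hvT, hlt⟩
      obtain ⟨m, u, hu, rfl⟩ := mem_glueTree_iff.mp hvT
      rcases lt_trichotomy m n with h | rfl | h
      · exact ⟨(m, u), Or.inl ⟨hu, h⟩, rfl⟩
      · have := lt_of_append_lt_append_left hlt
        exact ⟨(m, u), Or.inr ⟨u, ⟨hu, this⟩, rfl⟩, rfl⟩
      · exact absurd (glue_lt_of_fst_lt hθ hfin hw h u) (asymm hlt)
    · rintro ⟨⟨m, u⟩, (⟨hu, hm⟩ | ⟨w', ⟨hw', hlt⟩, heq⟩), rfl⟩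
      · exact ⟨glue_mem hu, glue_lt_of_fst_lt hθ hfin hu hm w⟩
      · obtain ⟨rfl, rfl⟩ := Prod.mk.inj heq.symm
        exact ⟨glue_mem hw', append_lt_append_left _ hlt⟩
  have hsub : Bset θ n ∪ Prod.mk n '' {w' ∈ θ n | w' < w} ⊆ {q : ℕ × List ℕ | q.2 ∈ θ q.1} := by
    rintro ⟨m, u⟩ (⟨hu, -⟩ | ⟨w', ⟨hw', -⟩, heq⟩)
    · exact hu
    · obtain ⟨rfl, rfl⟩ := Prod.mk.inj heq.symm
      exact hw'
  have hfin2 : ({w' ∈ θ n | w' < w}).Finite := (hfin n).subset (fun u hu => hu.1)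
  rw [rank, hA,
    Set.ncard_image_of_injOn ((glue_injOn hθ hfin).mono hsub),
    Set.ncard_union_eq ((Bset_disjoint θ n).mono_right
      (Set.image_mono (fun u hu => hu.1))) (Bset_finite hfin n) (hfin2.image _),
    ncard_Bset hfin n,
    Set.ncard_image_of_injOn (Set.injOn_of_injective (fun a b h => (Prod.mk.inj h).2)),
    seqRank_eq, rank]

lemma luk_glue (k : ℕ) :
    luk (glueTree θ) k = seqLuk θ k
      + (((Finset.range k).filter (fun m => Sfun θ m < k)).card : ℤ) := by
  classical
  set φ := fun q : ℕ × List ℕ => bbGlue θ q.1 ++ q.2 with hφ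
  set Q := {q : ℕ × List ℕ | q.2 ∈ θ q.1 ∧ seqRank θ q < k} with hQ
  have hQsub' : Q ⊆ {q : ℕ × List ℕ | q.2 ∈ θ q.1} := fun q hq => hq.1
  have hQsub : Q ⊆ Bset θ k := by
    rintro ⟨m, u⟩ ⟨hu, hr⟩
    refine ⟨hu, ?_⟩
    rw [seqRank_eq] at hr
    have := Sfun_ge hθ hfin m
    omega
  have hQfin : Q.Finite := (Bset_finite hfin k).subset hQsub
  have hVQ : {u ∈ glueTree θ | rank (glueTree θ) u < k} = φ '' Q := by
    ext v
    simp only [Set.mem_setOf_eq, Set.mem_image]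
    constructor
    · rintro ⟨hvT, hr⟩
      obtain ⟨m, u, hu, rfl⟩ := mem_glueTree_iff.mp hvT
      exact ⟨(m, u), ⟨hu, by rwa [← rank_glue hθ hfin hu]⟩, rfl⟩
    · rintro ⟨⟨m, u⟩, ⟨hu, hr⟩, rfl⟩
      exact ⟨glue_mem hu, by rwa [rank_glue hθ hfin hu]⟩
  rw [luk, hVQ, finsum_mem_image ((glue_injOn hθ hfin).mono hQsub')]
  have hcong : ∀ q ∈ Q, ((kv (glueTree θ) (φ q) : ℤ) - 1)
      = (((kv (θ q.1) q.2 : ℤ) - 1) + (if q.2 = [] then (1:ℤ) else 0)) := by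
    rintro ⟨m, u⟩ ⟨hu, -⟩
    by_cases hne : u = []
    · subst hne
      have h1 : φ (m, []) = bbGlue θ m := by simp [hφ]
      rw [h1, kv_glue_nil hθ hfin m]
      simp [rootDeg]
    · have h1 : φ (m, u) = bbGlue θ m ++ u := rfl
      rw [h1, kv_glue_ne hθ hfin hu hne]
      simp [hne]
  rw [finsum_mem_congr rfl hcong, finsum_mem_add_distrib hQfin]
  have h1 : ∑ᶠ q ∈ Q, ((kv (θ q.1) q.2 : ℤ) - 1) = seqLuk θ k := rfl
  have h2 : ∑ᶠ q ∈ Q, (if q.2 = ([] : List ℕ) then (1:ℤ) else 0)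
      = (((Finset.range k).filter (fun m => Sfun θ m < k)).card : ℤ) := by
    rw [← hQfin.coe_toFinset, finsum_mem_coe_finset, Finset.sum_boole]
    congr 1
    apply Finset.card_nbij' (fun q => q.1) (fun m => (m, ([] : List ℕ)))
    · rintro ⟨m, u⟩ hq
      simp only [Finset.mem_coe, Finset.mem_filter, Set.Finite.mem_toFinset, hQ, Set.mem_setOf_eq] at hq
      obtain ⟨⟨hu, hr⟩, hnil⟩ := hq
      subst hnil
      rw [seqRank_eq, rank_nil] at hr
      simp only [Finset.mem_coe, Finset.mem_filter, Finset.mem_range]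
      have := Sfun_ge hθ hfin m
      omega
    · intro m hm
      simp only [Finset.mem_coe, Finset.mem_filter, Finset.mem_range] at hm
      simp only [Finset.mem_coe, Finset.mem_filter, Set.Finite.mem_toFinset, hQ, Set.mem_setOf_eq]
      refine ⟨⟨(hθ m).1, ?_⟩, trivial⟩
      rw [seqRank_eq, rank_nil]
      omega
    · rintro ⟨m, u⟩ hq
      simp only [Finset.mem_coe, Finset.mem_filter] at hq
      simp [hq.2]
    · intro m _
      rfl
  rw [h1, h2]

lemma sum_Bset (m : ℕ) :
    ∑ᶠ q ∈ Bset θ m, ((kv (θ q.1) q.2 : ℤ) - 1) = -(m : ℤ) := by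
  induction m with
  | zero => rw [Bset_zero, finsum_mem_empty]; simp
  | succ m ih =>
    rw [Bset_succ, finsum_mem_union (Bset_disjoint θ m) (Bset_finite hfin m)
      ((hfin m).image _), ih,
      finsum_mem_image (Set.injOn_of_injective (fun a b h => (Prod.mk.inj h).2))]
    have hfull : ∑ᶠ w ∈ θ m, ((kv (θ m) w : ℤ) - 1) = luk (θ m) ((θ m).ncard) := by
      have hset : {u ∈ θ m | rank (θ m) u < (θ m).ncard} = θ m := by
        ext u
        simp only [Set.mem_setOf_eq, and_iff_left_iff_imp]
        exact fun hu => rank_lt_ncard (hfin m) hu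
      rw [luk, hset]
    rw [hfull, luk_full (hθ m) (hfin m) le_rfl]
    push_cast
    ring

lemma seqLuk_formula (m j : ℕ) (hj : j ≤ (θ m).ncard) :
    seqLuk θ (Sfun θ m + j) = -(m : ℤ) + luk (θ m) j := by
  have hE : {q : ℕ × List ℕ | q.2 ∈ θ q.1 ∧ seqRank θ q < Sfun θ m + j}
      = Bset θ m ∪ Prod.mk m '' {w ∈ θ m | rank (θ m) w < j} := by
    ext ⟨i, u⟩
    simp only [Set.mem_setOf_eq, Set.mem_union, Set.mem_image, Bset, seqRank_eq]
    constructor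
    · rintro ⟨hu, hr⟩
      rcases lt_trichotomy i m with h | rfl | h
      · exact Or.inl ⟨hu, h⟩
      · exact Or.inr ⟨u, ⟨hu, by omega⟩, rfl⟩
      · exfalso
        have h1 : Sfun θ m + (θ m).ncard ≤ Sfun θ i := by
          have := Sfun_mono (θ := θ) (show m + 1 ≤ i from h)
          rw [Sfun_succ] at this
          omega
        omega
    · rintro (⟨hu, hi⟩ | ⟨w, ⟨hw, hr⟩, heq⟩)
      · refine ⟨hu, ?_⟩
        have h1 : rank (θ i) u < (θ i).ncard := rank_lt_ncard (hfin i) hu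
        have h2 : Sfun θ i + (θ i).ncard ≤ Sfun θ m := by
          have := Sfun_mono (θ := θ) (show i + 1 ≤ m from hi)
          rw [Sfun_succ] at this
          omega
        omega
      · obtain ⟨rfl, rfl⟩ := Prod.mk.inj heq.symm
        exact ⟨hw, by omega⟩
  have hfin2 : ({w ∈ θ m | rank (θ m) w < j}).Finite := (hfin m).subset (fun u hu => hu.1)
  rw [seqLuk, hE, finsum_mem_union ((Bset_disjoint θ m).mono_right
      (Set.image_mono (fun u hu => hu.1))) (Bset_finite hfin m) (hfin2.image _),
    sum_Bset hθ hfin m,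
    finsum_mem_image (Set.injOn_of_injective (fun a b h => (Prod.mk.inj h).2))]
  rfl

lemma decompose (i : ℕ) :
    ∃ m j, i = Sfun θ m + j ∧ j < (θ m).ncard ∧ Sfun θ m ≤ i := by
  classical
  set M := Nat.findGreatest (fun m => Sfun θ m ≤ i) i with hM
  have hP0 : Sfun θ 0 ≤ i := by simp [Sfun]
  have hPM : Sfun θ M ≤ i := by
    rw [hM]
    exact Nat.findGreatest_spec (P := fun m => Sfun θ m ≤ i) (Nat.zero_le i) hP0
  have hnext : ¬ (Sfun θ (M + 1) ≤ i) := by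
    intro h
    have hle : M + 1 ≤ i := le_trans (Sfun_ge hθ hfin (M + 1)) h
    have hgt : Nat.findGreatest (fun m => Sfun θ m ≤ i) i < M + 1 := by
      rw [← hM]
      omega
    exact Nat.findGreatest_is_greatest hgt hle h
  refine ⟨M, i - Sfun θ M, by omega, ?_, hPM⟩
  rw [Sfun_succ] at hnext
  omega

end Glue2


/-- Gluing a sequence of finite plane trees to a rightmost backbone:
the Lukaciewicz path `V` of the glued sin-tree and the Lukaciewicz path `U` of the
sequence satisfy `V(n) = U(n) + 1 - U̲(n-1)`, with the convention `U̲(-1) = 1`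
(so `V(0) = U(0) + 1 - 1`) and `U̲(m) = min_{0 ≤ i ≤ m} U(i)`. -/
theorem luk_glue_to_backbone (θ : ℕ → Set (List ℕ))
    (hθ : ∀ n, IsPlaneTree (θ n)) (hfin : ∀ n, (θ n).Finite) :
    luk (glueTree θ) 0 = seqLuk θ 0 + 1 - 1 ∧
    ∀ n : ℕ, luk (glueTree θ) (n + 1) =
      seqLuk θ (n + 1) + 1 -
        (Finset.range (n + 1)).inf' Finset.nonempty_range_add_one (fun i => seqLuk θ i) := by
  classical
  constructor
  · rw [luk_glue hθ hfin 0]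
    simp
  · intro n
    set M := Nat.findGreatest (fun m => Sfun θ m ≤ n) n with hMdef
    have hP0 : Sfun θ 0 ≤ n := by simp [Sfun]
    have hPM : Sfun θ M ≤ n := by
      rw [hMdef]
      exact Nat.findGreatest_spec (P := fun m => Sfun θ m ≤ n) (Nat.zero_le n) hP0
    have hMle : ∀ m, Sfun θ m ≤ n → m ≤ M := by
      intro m hm
      rw [hMdef]
      exact Nat.le_findGreatest (le_trans (Sfun_ge hθ hfin m) hm) hm
    have hcard : ((Finset.range (n+1)).filter (fun m => Sfun θ m < n+1)).card = M + 1 := by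
      have hset : (Finset.range (n+1)).filter (fun m => Sfun θ m < n+1)
          = Finset.range (M+1) := by
        ext m
        simp only [Finset.mem_filter, Finset.mem_range]
        constructor
        · rintro ⟨h1, h2⟩
          have := hMle m (by omega)
          omega
        · intro hm
          have h1 : Sfun θ m ≤ Sfun θ M := Sfun_mono (by omega)
          have h2 := Sfun_ge hθ hfin m
          omega
      rw [hset, Finset.card_range]
    have hinf : (Finset.range (n+1)).inf' Finset.nonempty_range_add_one
        (fun i => seqLuk θ i) = -(M : ℤ) := by
      apply le_antisymm
      · have hmem : Sfun θ M ∈ Finset.range (n+1) := Finset.mem_range.mpr (by omega)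
        calc (Finset.range (n+1)).inf' Finset.nonempty_range_add_one (fun i => seqLuk θ i)
            ≤ seqLuk θ (Sfun θ M) := Finset.inf'_le _ hmem
          _ = -(M : ℤ) := by
            have h := seqLuk_formula hθ hfin M 0 (Nat.zero_le _)
            rw [Nat.add_zero] at h
            rw [h, luk_zero]
            ring
      · apply Finset.le_inf'
        intro i hi
        obtain ⟨m, j, rfl, hj, hSm⟩ := decompose hθ hfin i
        have hmM : m ≤ M := hMle m (le_trans hSm (Nat.lt_succ_iff.mp (Finset.mem_range.mp hi)))
        rw [seqLuk_formula hθ hfin m j (le_of_lt hj)]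
        have h1 := luk_ge (hθ m) (hfin m) hj
        have h2 : -(M : ℤ) ≤ -(m : ℤ) := by
          simp only [neg_le_neg_iff]
          exact_mod_cast hmM
        omega
    rw [luk_glue hθ hfin (n+1), hcard, hinf]
    push_cast
    ring

end IPC
end
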